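/- Let D be a positive, 1-periodic, C² function, let r ≡ r₀ be a constant function, and let q̃, λ ∈ ℝ. If (k₋, ψ) is a principal eigenpair of L_{1/2−q̃}^λ[r₀;D] and (k₊, φ) is a principal eigenpair of L_{1/2+q̃}^λ[r₀;D], then k₋ = k₊. Consequently, given for every λ > 0 principal eigenpairs of both operators, the spreading speeds coincide: inf_{λ>0} k_{1/2−q̃}^λ[r₀;D]/λ = inf_{λ>0} k_{1/2+q̃}^λ[r₀;D]/λ; in particular the Fickian (q = 0) and Fokker–Planck (q = 1) spreading speeds are equal. -/

import Mathlib

open Real MeasureTheory Set Filter Topology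

noncomputable section

/-- The operator `L_q^λ[r;D]` acting on C² functions `ψ`:
`(L_q^λ[r;D]ψ)(x) = D ψ'' + ((1+q)D' − 2λD) ψ' + (qD'' + λ²D − (1+q)λD' + r) ψ`. -/
def Lop (q lam : ℝ) (r D ψ : ℝ → ℝ) (x : ℝ) : ℝ :=
  D x * deriv (deriv ψ) x + ((1 + q) * deriv D x - 2 * lam * D x) * deriv ψ x +
    (q * deriv (deriv D) x + lam ^ 2 * D x - (1 + q) * lam * deriv D x + r x) * ψ x

/-- `(k, ψ)` is a principal eigenpair of `L_q^λ[r;D]`: `ψ` is a positive, 1-periodic,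
C² function with `L_q^λ[r;D]ψ = kψ`. -/
def IsEigenpair (q lam : ℝ) (r D : ℝ → ℝ) (k : ℝ) (ψ : ℝ → ℝ) : Prop :=
  ContDiff ℝ 2 ψ ∧ (∀ x, 0 < ψ x) ∧ Function.Periodic ψ 1 ∧
    ∀ x, Lop q lam r D ψ x = k * ψ x

/-- The Freidlin–Gärtner infimum `inf_{λ>0} k(λ)/λ`, as an extended real number. -/
def speed (k : ℝ → ℝ) : EReal := ⨅ l : {l : ℝ // 0 < l}, ((k l.1 / l.1 : ℝ) : EReal)

section Auxiliary


lemma cd2_diff {f : ℝ → ℝ} (hf : ContDiff ℝ 2 f) : Differentiable ℝ f :=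
  hf.differentiable (by norm_num)

lemma cd2_deriv {f : ℝ → ℝ} (hf : ContDiff ℝ 2 f) : ContDiff ℝ 1 (deriv f) := by
  rw [show (2 : WithTop ℕ∞) = 1 + 1 by norm_num] at hf
  exact (contDiff_succ_iff_deriv.mp hf).2.2

lemma cd2_deriv2_cont {f : ℝ → ℝ} (hf : ContDiff ℝ 2 f) : Continuous (deriv (deriv f)) :=
  (contDiff_one_iff_deriv.mp (cd2_deriv hf)).2

lemma cd2_deriv_diff {f : ℝ → ℝ} (hf : ContDiff ℝ 2 f) : Differentiable ℝ (deriv f) :=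
  (cd2_deriv hf).differentiable one_ne_zero

lemma cd2_of_deriv {f : ℝ → ℝ} (h1 : Differentiable ℝ f) (h2 : ContDiff ℝ 1 (deriv f)) :
    ContDiff ℝ 2 f := by
  rw [show (2 : WithTop ℕ∞) = 1 + 1 by norm_num]
  exact contDiff_succ_iff_deriv.mpr ⟨h1, by simp, h2⟩

/-- Second derivative test at a local max. -/
lemma second_deriv_nonpos_at_max {f : ℝ → ℝ} (hf : ContDiff ℝ 2 f) {x : ℝ}
    (h : IsLocalMax f x) : deriv (deriv f) x ≤ 0 := by
  by_contra hlt
  push_neg at hlt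
  have hd0 : deriv f x = 0 := h.deriv_eq_zero
  -- neighborhood where f'' > 0
  have hmem : {y | 0 < deriv (deriv f) y} ∈ 𝓝 x :=
    (isOpen_lt continuous_const (cd2_deriv2_cont hf)).mem_nhds hlt
  obtain ⟨ε, hε, hball⟩ := Metric.mem_nhds_iff.mp hmem
  obtain ⟨δ, hδ, hballδ⟩ := Metric.mem_nhds_iff.mp h
  set c : ℝ := min ε δ / 2 with hc
  have hcpos : 0 < c := by positivity
  have hcε : c < ε := by
    have := min_le_left ε δ; simp only [hc]; linarith
  have hcδ : c < δ := by
    have := min_le_right ε δ; simp only [hc]; linarith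
  -- f' strictly monotone on [x, x+c]
  have hsub : Ioo x (x + c) ⊆ Metric.ball x ε := by
    intro y hy
    rw [Metric.mem_ball, Real.dist_eq, abs_lt]
    constructor <;> [linarith [hy.1]; linarith [hy.2]]
  have hmono' : StrictMonoOn (deriv f) (Icc x (x + c)) := by
    apply strictMonoOn_of_deriv_pos (convex_Icc _ _) ((cd2_deriv hf).continuous.continuousOn)
    intro y hy
    rw [interior_Icc] at hy
    exact hball (hsub hy)
  -- hence f' > 0 on (x, x+c)
  have hfpos : ∀ y ∈ Ioo x (x + c), 0 < deriv f y := by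
    intro y hy
    have := hmono' (left_mem_Icc.mpr (by linarith)) ⟨le_of_lt hy.1, le_of_lt hy.2⟩ hy.1
    rwa [hd0] at this
  -- hence f strictly monotone on [x, x+c]
  have hmono : StrictMonoOn f (Icc x (x + c)) := by
    apply strictMonoOn_of_deriv_pos (convex_Icc _ _) (hf.continuous.continuousOn)
    intro y hy
    rw [interior_Icc] at hy
    exact hfpos y hy
  have hxy : f x < f (x + c / 2) := by
    apply hmono (left_mem_Icc.mpr (by linarith)) ⟨by linarith, by linarith⟩ (by linarith)
  have : f (x + c / 2) ≤ f x := by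
    apply hballδ
    rw [Metric.mem_ball, Real.dist_eq]
    rw [abs_lt]; constructor <;> linarith
  linarith

lemma second_deriv_nonneg_at_min {f : ℝ → ℝ} (hf : ContDiff ℝ 2 f) {x : ℝ}
    (h : IsLocalMin f x) : 0 ≤ deriv (deriv f) x := by
  have hneg := second_deriv_nonpos_at_max hf.neg h.neg
  have e1 : deriv (fun y => -f y) = fun y => -deriv f y := funext fun y => deriv.neg
  rw [e1] at hneg
  have e2 : deriv (fun y => -deriv f y) x = -deriv (deriv f) x := deriv.neg
  rw [e2] at hneg
  linarith

/-- A continuous 1-periodic function attains a global max. -/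
lemma periodic_exists_max {f : ℝ → ℝ} (hf : Continuous f) (hp : Function.Periodic f 1) :
    ∃ x₀, ∀ x, f x ≤ f x₀ := by
  obtain ⟨x₀, _, hmax⟩ :=
    isCompact_Icc.exists_isMaxOn (Set.nonempty_Icc.mpr zero_le_one) hf.continuousOn
  refine ⟨x₀, fun x => ?_⟩
  have h1 : f (x - (⌊x⌋ : ℝ) * 1) = f x := hp.sub_int_mul_eq ⌊x⌋
  rw [mul_one] at h1
  have h2 : x - (⌊x⌋ : ℝ) ∈ Icc (0:ℝ) 1 := by
    constructor
    · linarith [Int.floor_le x]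
    · linarith [Int.lt_floor_add_one x]
  calc f x = f (x - (⌊x⌋ : ℝ)) := h1.symm
    _ ≤ f x₀ := hmax h2

lemma periodic_exists_min {f : ℝ → ℝ} (hf : Continuous f) (hp : Function.Periodic f 1) :
    ∃ x₀, ∀ x, f x₀ ≤ f x := by
  obtain ⟨x₀, h⟩ := periodic_exists_max hf.neg (fun x => by simp [hp x])
  exact ⟨x₀, fun x => by have := h x; simpa using this⟩

/-- derivative of a quasi-periodic function is quasi-periodic -/
lemma quasi_deriv {f : ℝ → ℝ} (hf : Differentiable ℝ f) {c : ℝ}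
    (h : ∀ x, f (x + 1) = c * f x) : ∀ x, deriv f (x + 1) = c * deriv f x := by
  intro x
  have e : (fun y => f (y + 1)) = fun y => c * f y := funext h
  have h1 : deriv (fun y => f (y + 1)) x = deriv f (x + 1) := deriv_comp_add_const f 1 x
  rw [e] at h1
  rw [← h1, deriv_const_mul c (hf x)]

/-- smoothness of rpow of a positive C² function -/
lemma cd2_rpow {D : ℝ → ℝ} (hD : ContDiff ℝ 2 D) (hDpos : ∀ x, 0 < D x) (p : ℝ) :
    ContDiff ℝ 2 (fun x => D x ^ p) := by
  rw [contDiff_iff_contDiffAt]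
  intro x
  exact hD.contDiffAt.rpow_const_of_ne (hDpos x).ne'

/-- The "flux" `D^a v'` has derivative `μ D^(a-1) v` when `v` solves the ODE. -/
lemma flux_hasDeriv {D v : ℝ → ℝ} (hD : ContDiff ℝ 2 D) (hDpos : ∀ x, 0 < D x)
    (hv2 : ContDiff ℝ 2 v) (a μ : ℝ)
    (hveq : ∀ x, D x * deriv (deriv v) x + a * deriv D x * deriv v x = μ * v x) (x : ℝ) :
    HasDerivAt (fun y => D y ^ a * deriv v y) (μ * (D x ^ (a - 1) * v x)) x := by
  have hA : HasDerivAt (fun y => D y ^ a) (deriv D x * a * D x ^ (a - 1)) x :=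
    (cd2_diff hD x).hasDerivAt.rpow_const (Or.inl (hDpos x).ne')
  have hB : HasDerivAt (deriv v) (deriv (deriv v) x) x := (cd2_deriv_diff hv2 x).hasDerivAt
  have h : HasDerivAt (fun y => D y ^ a * deriv v y)
      (deriv D x * a * D x ^ (a - 1) * deriv v x + D x ^ a * deriv (deriv v) x) x := hA.mul hB
  convert h using 1
  have e1 : D x ^ a = D x ^ (a - 1) * D x := by
    rw [← Real.rpow_add_one (hDpos x).ne' (a - 1), sub_add_cancel]
  rw [e1]
  linear_combination (-(D x ^ (a - 1))) * hveq x

/-- Key comparison lemma. -/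
lemma key {D : ℝ → ℝ} (hD : ContDiff ℝ 2 D) (hDpos : ∀ x, 0 < D x)
    (hDper : Function.Periodic D 1) {a b lam μ ν : ℝ} (hab : a + b = 1)
    {v w : ℝ → ℝ} (hv2 : ContDiff ℝ 2 v) (hw2 : ContDiff ℝ 2 w)
    (hvpos : ∀ x, 0 < v x) (hwpos : ∀ x, 0 < w x)
    (hvq : ∀ x, v (x + 1) = Real.exp (-lam) * v x)
    (hwq : ∀ x, w (x + 1) = Real.exp (-lam) * w x)
    (hveq : ∀ x, D x * deriv (deriv v) x + a * deriv D x * deriv v x = μ * v x)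
    (hweq : ∀ x, D x * deriv (deriv w) x + b * deriv D x * deriv w x = ν * w x) :
    μ ≤ ν := by
  by_contra hlt
  push_neg at hlt
  have hDd : Differentiable ℝ D := cd2_diff hD
  have hvd : Differentiable ℝ v := cd2_diff hv2
  have hvd' : Differentiable ℝ (deriv v) := cd2_deriv_diff hv2
  have hwd : Differentiable ℝ w := cd2_diff hw2
  have hwd' : Differentiable ℝ (deriv w) := cd2_deriv_diff hw2
  have hwne : ∀ x, w x ≠ 0 := fun x => (hwpos x).ne'
  set z : ℝ → ℝ := fun x => D x ^ a * deriv v x with hzdef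
  have hz' : ∀ x, HasDerivAt z (μ * (D x ^ (a - 1) * v x)) x :=
    fun x => flux_hasDeriv hD hDpos hv2 a μ hveq x
  have hdz : deriv z = fun x => μ * (D x ^ (a - 1) * v x) := funext fun x => (hz' x).deriv
  have hzdiff : Differentiable ℝ z := fun x => (hz' x).differentiableAt
  have hz2 : ContDiff ℝ 2 z := by
    apply cd2_of_deriv hzdiff
    rw [hdz]
    exact (contDiff_const.mul (((cd2_rpow hD hDpos (a - 1)).of_le one_le_two).mul
      (hv2.of_le one_le_two)))
  -- second derivative of z and its ODE
  have hzeq : ∀ x, D x * deriv (deriv z) x + b * deriv D x * deriv z x = μ * z x := by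
    intro x
    have hA : HasDerivAt (fun y => D y ^ (a - 1)) (deriv D x * (a - 1) * D x ^ (a - 1 - 1)) x :=
      (hDd x).hasDerivAt.rpow_const (Or.inl (hDpos x).ne')
    have h2 : HasDerivAt (fun y => μ * (D y ^ (a - 1) * v y))
        (μ * ((deriv D x * (a - 1) * D x ^ (a - 1 - 1)) * v x + D x ^ (a - 1) * deriv v x)) x :=
      (hA.mul (hvd x).hasDerivAt).const_mul μ
    have hzz : deriv (deriv z) x = μ * ((deriv D x * (a - 1) * D x ^ (a - 1 - 1)) * v x
        + D x ^ (a - 1) * deriv v x) := by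
      rw [hdz]; exact h2.deriv
    rw [hzz, hdz]
    simp only [hzdef]
    have e1 : D x ^ a = D x ^ (a - 1) * D x := by
      rw [← Real.rpow_add_one (hDpos x).ne' (a - 1), sub_add_cancel]
    have e2 : D x ^ (a - 1) = D x ^ (a - 1 - 1) * D x := by
      rw [← Real.rpow_add_one (hDpos x).ne' (a - 1 - 1), sub_add_cancel]
    rw [e1, e2]
    linear_combination (μ * deriv D x * (D x ^ (a - 1 - 1) * D x) * v x) * hab
  -- the ratio R = z / w
  set R : ℝ → ℝ := fun x => z x / w x with hRdef
  have hR2 : ContDiff ℝ 2 R := hz2.div hw2 hwne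
  have hRd : Differentiable ℝ R := cd2_diff hR2
  have hRd' : Differentiable ℝ (deriv R) := cd2_deriv_diff hR2
  have hzRw : ∀ x, z x = R x * w x := fun x => (div_mul_cancel₀ (z x) (hwne x)).symm
  have hz1 : ∀ x, deriv z x = deriv R x * w x + R x * deriv w x := by
    intro x
    have : z = fun x => R x * w x := funext hzRw
    rw [this]
    exact deriv_mul (hRd x) (hwd x)
  have hz2' : ∀ x, deriv (deriv z) x = (deriv (deriv R) x * w x + deriv R x * deriv w x)
      + (deriv R x * deriv w x + R x * deriv (deriv w) x) := by
    intro x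
    have e : deriv z = fun x => deriv R x * w x + R x * deriv w x := funext hz1
    rw [e]
    have h1 : HasDerivAt (fun x => deriv R x * w x)
        (deriv (deriv R) x * w x + deriv R x * deriv w x) x :=
      (hRd' x).hasDerivAt.mul (hwd x).hasDerivAt
    have h2 : HasDerivAt (fun x => R x * deriv w x)
        (deriv R x * deriv w x + R x * deriv (deriv w) x) x :=
      (hRd x).hasDerivAt.mul (hwd' x).hasDerivAt
    exact (h1.add h2).deriv
  have hReq : ∀ x, D x * deriv (deriv R) x * w x
      + (2 * D x * deriv w x + b * deriv D x * w x) * deriv R x = (μ - ν) * (R x * w x) := by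
    intro x
    have h1 := hzeq x
    rw [hz2' x, hz1 x, hzRw x] at h1
    linear_combination h1 - R x * hweq x
  -- R is periodic
  have hvq' : ∀ x, deriv v (x + 1) = Real.exp (-lam) * deriv v x := quasi_deriv hvd hvq
  have hzq : ∀ x, z (x + 1) = Real.exp (-lam) * z x := by
    intro x
    simp only [hzdef]
    rw [hDper x, hvq' x]
    ring
  have hRper : Function.Periodic R 1 := by
    intro x
    simp only [hRdef]
    rw [hzq x, hwq x, mul_div_mul_left _ _ (Real.exp_ne_zero _)]
  -- max principle
  obtain ⟨x₀, hx₀⟩ := periodic_exists_max hR2.continuous hRper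
  obtain ⟨x₁, hx₁⟩ := periodic_exists_min hR2.continuous hRper
  have hlm : IsLocalMax R x₀ := Filter.Eventually.of_forall hx₀
  have hlm' : IsLocalMin R x₁ := Filter.Eventually.of_forall hx₁
  have hR0 : R x₀ ≤ 0 := by
    have h := hReq x₀
    rw [hlm.deriv_eq_zero, mul_zero, add_zero] at h
    have h2 := second_deriv_nonpos_at_max hR2 hlm
    by_contra hc
    push_neg at hc
    have h1 : 0 < (μ - ν) * (R x₀ * w x₀) :=
      mul_pos (sub_pos.mpr hlt) (mul_pos hc (hwpos x₀))
    have h3 : D x₀ * deriv (deriv R) x₀ * w x₀ ≤ 0 :=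
      mul_nonpos_of_nonpos_of_nonneg
        (mul_nonpos_of_nonneg_of_nonpos (hDpos x₀).le h2) (hwpos x₀).le
    linarith
  have hR1 : 0 ≤ R x₁ := by
    have h := hReq x₁
    rw [hlm'.deriv_eq_zero, mul_zero, add_zero] at h
    have h2 := second_deriv_nonneg_at_min hR2 hlm'
    by_contra hc
    push_neg at hc
    have h1 : (μ - ν) * (R x₁ * w x₁) < 0 :=
      mul_neg_of_pos_of_neg (sub_pos.mpr hlt) (mul_neg_of_neg_of_pos hc (hwpos x₁))
    have h3 : 0 ≤ D x₁ * deriv (deriv R) x₁ * w x₁ :=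
      mul_nonneg (mul_nonneg (hDpos x₁).le h2) (hwpos x₁).le
    linarith
  have hRzero : ∀ x, R x = 0 := fun x =>
    le_antisymm (le_trans (hx₀ x) hR0) (le_trans hR1 (hx₁ x))
  -- hence v' ≡ 0
  have hv'0 : ∀ x, deriv v x = 0 := by
    intro x
    have hz0 : z x = 0 := by rw [hzRw x, hRzero x, zero_mul]
    have hp : (0:ℝ) < D x ^ a := Real.rpow_pos_of_pos (hDpos x) a
    simp only [hzdef] at hz0
    rcases mul_eq_zero.mp hz0 with h | h
    · exact absurd h hp.ne'
    · exact h
  have hμ0 : μ = 0 := by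
    have h := hveq 0
    have hdd : deriv (deriv v) = fun _ => (0:ℝ) := by
      rw [show deriv v = fun _ => (0:ℝ) from funext hv'0]
      exact funext fun x => deriv_const x 0
    rw [congrFun hdd 0, hv'0 0] at h
    simp only [mul_zero, zero_mul, add_zero, zero_add] at h
    rcases mul_eq_zero.mp h.symm with h | h
    · exact h
    · exact absurd h (hvpos 0).ne'
  have hlam0 : lam = 0 := by
    have hconst := is_const_of_deriv_eq_zero hvd hv'0
    have h := hvq 0
    rw [hconst (0 + 1) 0] at h
    have h2 : (Real.exp (-lam) - 1) * v 0 = 0 := by linear_combination -h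
    have hexp : Real.exp (-lam) = 1 := by
      rcases mul_eq_zero.mp h2 with h3 | h3
      · linarith
      · exact absurd h3 (hvpos 0).ne'
    rw [Real.exp_eq_one_iff] at hexp
    linarith
  -- w is genuinely periodic; integrate the flux identity for w
  have hwper : ∀ x, w (x + 1) = w x := by
    intro x; rw [hwq x, hlam0]; simp
  set Y : ℝ → ℝ := fun x => D x ^ b * deriv w x with hYdef
  have hY' : ∀ x, HasDerivAt Y (ν * (D x ^ (b - 1) * w x)) x :=
    fun x => flux_hasDeriv hD hDpos hw2 b ν hweq x
  have hY10 : Y 1 - Y 0 = 0 := by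
    have hwq' : ∀ x, deriv w (x + 1) = 1 * deriv w x :=
      quasi_deriv hwd (fun x => by rw [hwper x]; ring)
    have : Y (0 + 1) = Y 0 := by
      simp only [hYdef]
      rw [hDper 0, hwq' 0, one_mul]
    rw [show (1:ℝ) = 0 + 1 by norm_num, this, sub_self]
  have hcont : Continuous fun x => D x ^ (b - 1) * w x :=
    (hD.continuous.rpow_const (fun x => Or.inl (hDpos x).ne')).mul hw2.continuous
  have hint := intervalIntegral.integral_eq_sub_of_hasDerivAt
    (f := Y) (f' := fun x => ν * (D x ^ (b - 1) * w x))
    (fun x _ => hY' x) ((continuous_const.mul hcont).intervalIntegrable 0 1)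
  rw [hY10] at hint
  rw [intervalIntegral.integral_const_mul] at hint
  have hIpos : 0 < ∫ x in (0:ℝ)..1, D x ^ (b - 1) * w x := by
    apply intervalIntegral.intervalIntegral_pos_of_pos_on (hcont.intervalIntegrable 0 1)
    · exact fun x _ => mul_pos (Real.rpow_pos_of_pos (hDpos x) _) (hwpos x)
    · norm_num
  have hν0 : ν = 0 := by
    rcases mul_eq_zero.mp hint with h | h
    · exact h
    · exact absurd h hIpos.ne'
  rw [hμ0, hν0] at hlt
  exact lt_irrefl 0 hlt

/-- From a principal eigenpair, build a positive quasi-periodic solution of the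
self-adjoint-form ODE. -/
lemma build {D : ℝ → ℝ} (hD : ContDiff ℝ 2 D) (hDpos : ∀ x, 0 < D x)
    (hDper : Function.Periodic D 1) (q lam r₀ k : ℝ) {ψ : ℝ → ℝ}
    (hψ2 : ContDiff ℝ 2 ψ) (hψpos : ∀ x, 0 < ψ x) (hψper : Function.Periodic ψ 1)
    (hψeq : ∀ x, Lop q lam (fun _ => r₀) D ψ x = k * ψ x) :
    ∃ v : ℝ → ℝ, ContDiff ℝ 2 v ∧ (∀ x, 0 < v x) ∧
      (∀ x, v (x + 1) = Real.exp (-lam) * v x) ∧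
      ∀ x, D x * deriv (deriv v) x + (1 - q) * deriv D x * deriv v x = (k - r₀) * v x := by
  simp only [Lop] at hψeq
  have hDd : Differentiable ℝ D := cd2_diff hD
  have hψd : Differentiable ℝ ψ := cd2_diff hψ2
  have hψd' : Differentiable ℝ (deriv ψ) := cd2_deriv_diff hψ2
  set E : ℝ → ℝ := fun x => Real.exp (-(lam * x)) with hEdef
  set v : ℝ → ℝ := fun x => D x ^ q * (E x * ψ x) with hvdef
  have hE2 : ContDiff ℝ 2 E := Real.contDiff_exp.comp ((contDiff_const.mul contDiff_id).neg)
  have hEx : ∀ x, HasDerivAt E (E x * -lam) x := by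
    intro x
    have hlin : HasDerivAt (fun y : ℝ => -(lam * y)) (-lam) x := by
      have h := ((hasDerivAt_id x).const_mul lam).neg
      simp only [mul_one] at h
      exact h
    exact hlin.exp
  have hv2 : ContDiff ℝ 2 v := (cd2_rpow hD hDpos q).mul (hE2.mul hψ2)
  have hvpos : ∀ x, 0 < v x := fun x =>
    mul_pos (Real.rpow_pos_of_pos (hDpos x) q) (mul_pos (Real.exp_pos _) (hψpos x))
  have hvq : ∀ x, v (x + 1) = Real.exp (-lam) * v x := by
    intro x
    simp only [hvdef, hEdef]
    rw [hDper x, hψper x, show -(lam * (x + 1)) = -lam + -(lam * x) by ring, Real.exp_add]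
    ring
  -- first derivative
  have hApow : ∀ x, HasDerivAt (fun y => D y ^ q) (deriv D x * q * D x ^ (q - 1)) x :=
    fun x => (hDd x).hasDerivAt.rpow_const (Or.inl (hDpos x).ne')
  have hv1 : ∀ x, HasDerivAt v
      (deriv D x * q * D x ^ (q - 1) * (E x * ψ x)
        + D x ^ q * ((E x * -lam) * ψ x + E x * deriv ψ x)) x := by
    intro x
    exact (hApow x).mul ((hEx x).mul (hψd x).hasDerivAt)
  have hdv : deriv v = fun x => deriv D x * q * D x ^ (q - 1) * (E x * ψ x)
      + D x ^ q * ((E x * -lam) * ψ x + E x * deriv ψ x) :=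
    funext fun x => (hv1 x).deriv
  refine ⟨v, hv2, hvpos, hvq, ?_⟩
  intro x
  -- second derivative
  have h1 : HasDerivAt (deriv D) (deriv (deriv D) x) x := (cd2_deriv_diff hD x).hasDerivAt
  have h2 : HasDerivAt (fun y => D y ^ (q - 1)) (deriv D x * (q - 1) * D x ^ (q - 1 - 1)) x :=
    (hDd x).hasDerivAt.rpow_const (Or.inl (hDpos x).ne')
  have hψ'x : HasDerivAt (deriv ψ) (deriv (deriv ψ) x) x := (hψd' x).hasDerivAt
  have Hterm1 := ((h1.mul_const q).mul h2).mul ((hEx x).mul (hψd x).hasDerivAt)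
  have Hterm2 := (hApow x).mul
    ((((hEx x).mul_const (-lam)).mul (hψd x).hasDerivAt).add ((hEx x).mul hψ'x))
  have Hv2 := Hterm1.add Hterm2
  have hddv : deriv (fun x => deriv D x * q * D x ^ (q - 1) * (E x * ψ x)
      + D x ^ q * ((E x * -lam) * ψ x + E x * deriv ψ x)) x = _ := Hv2.deriv
  simp only [Pi.mul_apply, Pi.add_apply] at hddv
  rw [← hdv] at hddv
  rw [hddv, congrFun hdv x]
  have e1 : D x ^ q = D x ^ (q - 1) * D x := by
    rw [← Real.rpow_add_one (hDpos x).ne' (q - 1), sub_add_cancel]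
  have e2 : D x ^ (q - 1) = D x ^ (q - 1 - 1) * D x := by
    rw [← Real.rpow_add_one (hDpos x).ne' (q - 1 - 1), sub_add_cancel]
  rw [e1, e2]
  simp only [hvdef, hEdef, e1, e2]
  linear_combination (D x ^ (q - 1 - 1) * D x * D x * Real.exp (-(lam * x))) * hψeq x

end Auxiliary

/-- Theorem `r_constant (i)`. For constant growth rate `r₀`, the
principal eigenvalues of `L_{1/2−q̃}^λ` and `L_{1/2+q̃}^λ` coincide for every `λ`, and
hence the corresponding spreading speeds coincide. -/
theorem stmt_7 (D : ℝ → ℝ) (hD : ContDiff ℝ 2 D) (hDpos : ∀ x, 0 < D x)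
    (hDper : Function.Periodic D 1) (r₀ qt : ℝ)
    (km kp : ℝ → ℝ) (ψ φ : ℝ → ℝ → ℝ)
    (hm : ∀ lam : ℝ, IsEigenpair (1 / 2 - qt) lam (fun _ => r₀) D (km lam) (ψ lam))
    (hp : ∀ lam : ℝ, IsEigenpair (1 / 2 + qt) lam (fun _ => r₀) D (kp lam) (φ lam)) :
    (∀ lam : ℝ, km lam = kp lam) ∧ speed km = speed kp := by
  have hmain : ∀ lam : ℝ, km lam = kp lam := by
    intro lam
    obtain ⟨hψ2, hψpos, hψper, hψeq⟩ := hm lam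
    obtain ⟨hφ2, hφpos, hφper, hφeq⟩ := hp lam
    obtain ⟨v, hv2, hvpos, hvq, hveq⟩ :=
      build hD hDpos hDper (1 / 2 - qt) lam r₀ (km lam) hψ2 hψpos hψper hψeq
    obtain ⟨w, hw2, hwpos, hwq, hweq⟩ :=
      build hD hDpos hDper (1 / 2 + qt) lam r₀ (kp lam) hφ2 hφpos hφper hφeq
    have h1 : km lam - r₀ ≤ kp lam - r₀ :=
      key hD hDpos hDper (by ring) hv2 hw2 hvpos hwpos hvq hwq hveq hweq
    have h2 : kp lam - r₀ ≤ km lam - r₀ :=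
      key hD hDpos hDper (by ring) hw2 hv2 hwpos hvpos hwq hvq hweq hveq
    linarith
  exact ⟨hmain, by rw [funext hmain]⟩
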